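/- Let m_y := f_y^{-1} E[Z · 1{Y = y}] ∈ ℝ^p and let μ be the p×h matrix whose y-th column is √f_y · m_y. Then I_p − μ μᵀ = I_p − Σ_{y=1}^h f_y m_y m_yᵀ is positive semidefinite; consequently every eigenvalue of μ μᵀ lies in the interval [0, 1]. -/

import Mathlib

open MeasureTheory Matrix ProbabilityTheory

/-- Let `Y : Ω → {1,…,h}` with `f_y := ℙ(Y = y) > 0`, and `Z : Ω → ℝ^p`
square-integrable with `E[Z] = 0` and `E[Z Zᵀ] = I_p`.  Let
`m_y := f_y⁻¹ E[Z · 1{Y = y}]` and let `μmat` have y-th column `√f_y · m_y`.  Then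
`I_p - μmat μmatᵀ = I_p - Σ_y f_y m_y m_yᵀ` is positive semidefinite; consequently every
eigenvalue of `μmat μmatᵀ` lies in `[0, 1]`. -/
theorem stmt_13 {p h : ℕ} {Ω : Type*} [MeasurableSpace Ω]
    (μ : Measure Ω) [IsProbabilityMeasure μ]
    (Y : Ω → Fin h) (hY : Measurable Y)
    (Z : Ω → Fin p → ℝ) (hZ : ∀ i, MemLp (fun ω => Z ω i) 2 μ)
    (f : Fin h → ℝ) (hf : ∀ y, f y = (μ {ω | Y ω = y}).toReal)
    (hfpos : ∀ y, 0 < f y)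
    (hEZ : ∀ i, ∫ ω, Z ω i ∂μ = 0)
    (hZZ : ∀ i j, ∫ ω, Z ω i * Z ω j ∂μ = if i = j then (1 : ℝ) else 0)
    (m : Fin h → Fin p → ℝ)
    (hm : ∀ y i, m y i = (f y)⁻¹ * ∫ ω, Z ω i * (if Y ω = y then (1 : ℝ) else 0) ∂μ)
    (μmat : Matrix (Fin p) (Fin h) ℝ)
    (hμmat : ∀ i y, μmat i y = Real.sqrt (f y) * m y i) :
    (1 - μmat * μmatᵀ).PosSemidef ∧
    1 - μmat * μmatᵀ = 1 - ∑ y, f y • vecMulVec (m y) (m y) ∧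
    ∀ (t : ℝ) (v : Fin p → ℝ), v ≠ 0 → (μmat * μmatᵀ).mulVec v = t • v →
      0 ≤ t ∧ t ≤ 1 := by
  classical
  have hA : ∀ y : Fin h, MeasurableSet {ω | Y ω = y} := fun y =>
    hY (measurableSet_singleton y)
  have hμA0 : ∀ y, μ {ω | Y ω = y} ≠ 0 := by
    intro y hy
    have h1 := hf y
    rw [hy] at h1
    simp at h1
    exact absurd h1 (hfpos y).ne'
  have hindEq : ∀ (φ : Ω → ℝ) (y : Fin h),
      (fun ω => φ ω * (if Y ω = y then (1:ℝ) else 0)) = Set.indicator {ω | Y ω = y} φ := by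
    intro φ y
    funext ω
    by_cases hω : Y ω = y <;> simp [Set.indicator_apply, Set.mem_setOf_eq, hω]
  have hindInt : ∀ (φ : Ω → ℝ) (y : Fin h), Integrable φ μ →
      Integrable (fun ω => φ ω * (if Y ω = y then (1:ℝ) else 0)) μ := by
    intro φ y hφ
    rw [hindEq φ y]
    exact hφ.indicator (hA y)
  have hZmul : ∀ i j, Integrable (fun ω => Z ω i * Z ω j) μ := by
    intro i j
    have h1 := (hZ j).smul (hZ i) (p := 2) (q := 2) (r := 1) (hpqr := ⟨by rw [inv_one]; exact ENNReal.inv_two_add_inv_two⟩)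
    have h2 : ((fun ω => Z ω i) • fun ω => Z ω j) = fun ω => Z ω i * Z ω j := rfl
    rw [h2] at h1
    exact memLp_one_iff_integrable.mp h1
  -- key quadratic form bound
  have key : ∀ v : Fin p → ℝ, v ⬝ᵥ (μmat * μmatᵀ).mulVec v ≤ v ⬝ᵥ v := by
    intro v
    set g : Ω → ℝ := fun ω => ∑ i, v i * Z ω i with hgdef
    have hg : MemLp g 2 μ := memLp_finset_sum Finset.univ fun i _ => (hZ i).const_mul (v i)
    have hgint : Integrable g μ := hg.integrable one_le_two
    have hg2int : Integrable (fun ω => g ω ^ 2) μ := hg.integrable_sq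
    -- Step A : ∫ g² = v ⬝ᵥ v
    have hvv : ∫ ω, g ω ^ 2 ∂μ = v ⬝ᵥ v := by
      have hA1 : ∫ ω, g ω ^ 2 ∂μ
          = ∫ ω, ∑ i, ∑ j, (v i * v j) * (Z ω i * Z ω j) ∂μ := by
        congr 1
        funext ω
        rw [hgdef, sq, Finset.sum_mul_sum]
        exact Finset.sum_congr rfl fun i _ => Finset.sum_congr rfl fun j _ => by ring
      rw [hA1, integral_finset_sum _ fun i _ =>
          integrable_finset_sum _ fun j _ => (hZmul i j).const_mul _]
      have hA2 : ∀ i : Fin p, ∫ ω, ∑ j, (v i * v j) * (Z ω i * Z ω j) ∂μ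
          = ∑ j, (v i * v j) * (if i = j then (1:ℝ) else 0) := by
        intro i
        rw [integral_finset_sum _ fun j _ => (hZmul i j).const_mul _]
        exact Finset.sum_congr rfl fun j _ => by rw [integral_const_mul, hZZ i j]
      simp only [hA2]
      simp [dotProduct, Finset.sum_ite_eq, mul_ite]
    -- Step B
    have hB : ∀ y, ∑ i, v i * m y i
        = (f y)⁻¹ * ∫ ω, g ω * (if Y ω = y then (1:ℝ) else 0) ∂μ := by
      intro y
      have h1 : (fun ω => g ω * (if Y ω = y then (1:ℝ) else 0))
          = fun ω => ∑ i, v i * (Z ω i * (if Y ω = y then (1:ℝ) else 0)) := by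
        funext ω
        rw [hgdef, Finset.sum_mul]
        exact Finset.sum_congr rfl fun i _ => by ring
      rw [h1, integral_finset_sum _ fun i _ =>
        (hindInt _ y ((hZ i).integrable one_le_two)).const_mul _]
      rw [Finset.mul_sum]
      refine Finset.sum_congr rfl fun i _ => ?_
      rw [integral_const_mul, hm y i]
      ring
    -- Step C : Cauchy-Schwarz on each level set
    have hCS : ∀ y, (f y)⁻¹ * (∫ ω, g ω * (if Y ω = y then (1:ℝ) else 0) ∂μ) ^ 2
        ≤ ∫ ω, g ω ^ 2 * (if Y ω = y then (1:ℝ) else 0) ∂μ := by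
      intro y
      set A : Set Ω := {ω | Y ω = y} with hAdef
      have hprob : IsProbabilityMeasure (μ[|A]) := cond_isProbabilityMeasure (hμA0 y)
      have hgA : MemLp g 2 (μ[|A]) := by
        rw [ProbabilityTheory.cond]
        exact ((hg.restrict A).smul_measure (ENNReal.inv_ne_top.mpr (hμA0 y)))
      have hcint : ∀ (φ : Ω → ℝ),
          ∫ ω, φ ω ∂(μ[|A]) = (f y)⁻¹ * ∫ ω, φ ω * (if Y ω = y then 1 else 0) ∂μ := by
        intro φ
        rw [hindEq φ y, integral_indicator (hA y)]
        rw [ProbabilityTheory.cond, integral_smul_measure, ENNReal.toReal_inv, hf y]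
        rfl
      have hvar := variance_nonneg g (μ[|A])
      rw [variance_eq_sub hgA] at hvar
      have hg2 : (fun ω => (g ^ 2) ω) = fun ω => g ω ^ 2 := rfl
      have hI := hcint g
      have hJ := hcint fun ω => g ω ^ 2
      have hvar' : ((f y)⁻¹ * ∫ ω, g ω * (if Y ω = y then 1 else 0) ∂μ) ^ 2
          ≤ (f y)⁻¹ * ∫ ω, g ω ^ 2 * (if Y ω = y then 1 else 0) ∂μ := by
        have : ∫ ω, (g ^ 2) ω ∂(μ[|A]) = (f y)⁻¹ * ∫ ω, g ω ^ 2 * (if Y ω = y then 1 else 0) ∂μ := hJ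
        rw [this, hI] at hvar
        linarith
      have ht : (0:ℝ) < (f y)⁻¹ := inv_pos.mpr (hfpos y)
      rw [← mul_le_mul_iff_right₀ ht]
      calc (f y)⁻¹ * ((f y)⁻¹ * (∫ ω, g ω * (if Y ω = y then (1:ℝ) else 0) ∂μ) ^ 2)
          = ((f y)⁻¹ * ∫ ω, g ω * (if Y ω = y then (1:ℝ) else 0) ∂μ) ^ 2 := by ring
        _ ≤ (f y)⁻¹ * ∫ ω, g ω ^ 2 * (if Y ω = y then (1:ℝ) else 0) ∂μ := hvar'
    -- Step D : partition sum
    have hsum : ∑ y, ∫ ω, g ω ^ 2 * (if Y ω = y then (1:ℝ) else 0) ∂μ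
        = ∫ ω, g ω ^ 2 ∂μ := by
      rw [← integral_finset_sum _ fun y _ => hindInt _ y hg2int]
      congr 1
      funext ω
      simp [mul_ite, Finset.sum_ite_eq]
    -- quadratic form identity
    have hw : ∀ y, (v ᵥ* μmat) y = Real.sqrt (f y) * ∑ i, v i * m y i := by
      intro y
      simp only [vecMul, dotProduct, hμmat, Finset.mul_sum]
      exact Finset.sum_congr rfl fun i _ => by ring
    have hQ : v ⬝ᵥ (μmat * μmatᵀ).mulVec v = ∑ y, f y * (∑ i, v i * m y i) ^ 2 := by
      rw [show (μmat * μmatᵀ).mulVec v = μmat.mulVec (μmatᵀ.mulVec v) from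
        (mulVec_mulVec _ _ _).symm]
      rw [dotProduct_mulVec, mulVec_transpose]
      simp only [dotProduct]
      refine Finset.sum_congr rfl fun y _ => ?_
      rw [hw y, mul_mul_mul_comm, Real.mul_self_sqrt (hfpos y).le, sq]
    calc v ⬝ᵥ (μmat * μmatᵀ).mulVec v
        = ∑ y, f y * (∑ i, v i * m y i) ^ 2 := hQ
      _ = ∑ y, (f y)⁻¹ * (∫ ω, g ω * (if Y ω = y then (1:ℝ) else 0) ∂μ) ^ 2 := by
          refine Finset.sum_congr rfl fun y _ => ?_
          rw [hB y]
          have hne := (hfpos y).ne'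
          field_simp
      _ ≤ ∑ y, ∫ ω, g ω ^ 2 * (if Y ω = y then (1:ℝ) else 0) ∂μ :=
          Finset.sum_le_sum fun y _ => hCS y
      _ = ∫ ω, g ω ^ 2 ∂μ := hsum
      _ = v ⬝ᵥ v := hvv
  -- M is PSD
  have hpsdM : (μmat * μmatᵀ).PosSemidef := by
    have := Matrix.posSemidef_self_mul_conjTranspose μmat
    rwa [conjTranspose_eq_transpose_of_trivial] at this
  refine ⟨posSemidef_iff_dotProduct_mulVec.mpr ⟨?_, ?_⟩, ?_, ?_⟩
  · exact (isHermitian_one).sub hpsdM.1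
  · intro x
    have hk := key x
    have hM0 := hpsdM.dotProduct_mulVec_nonneg x
    simp only [star_trivial] at hM0 ⊢
    rw [sub_mulVec, dotProduct_sub, one_mulVec]
    linarith
  · congr 1
    ext i j
    simp only [mul_apply, transpose_apply, Matrix.sum_apply, Matrix.smul_apply,
      vecMulVec_apply, smul_eq_mul]
    refine Finset.sum_congr rfl fun y _ => ?_
    rw [hμmat i y, hμmat j y, mul_mul_mul_comm, Real.mul_self_sqrt (hfpos y).le]
  · intro t v hv hEv
    have hvvpos : 0 < v ⬝ᵥ v := by
      rcases lt_or_eq_of_le (Finset.sum_nonneg fun i _ => mul_self_nonneg (v i) :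
          (0:ℝ) ≤ v ⬝ᵥ v) with h1 | h1
      · exact h1
      · exact absurd ((dotProduct_self_eq_zero).mp h1.symm) hv
    have h1 : v ⬝ᵥ (μmat * μmatᵀ).mulVec v = t * (v ⬝ᵥ v) := by
      rw [hEv, dotProduct_smul, smul_eq_mul]
    have h2 : 0 ≤ v ⬝ᵥ (μmat * μmatᵀ).mulVec v := by
      have := hpsdM.dotProduct_mulVec_nonneg v
      simpa using this
    have h3 := key v
    constructor
    · nlinarith
    · nlinarith
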